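/- Let K be a compact Hausdorff topological group and let P be a closed subgroup of Aut(K), the group of all topological group automorphisms of K with the compact-open topology. Then the compact-open topology τ_co restricted to P is minimal within the class of π-uniform topologies on P; that is, every Hausdorff group topology σ on P which is coarser than τ_co and for which the natural evaluation action (P, σ) × K → K is π-uniform (with respect to the unique compatible uniformity on K) coincides with τ_co. -/

import Mathlib

open scoped Topology

/-- The group of self-homeomorphisms of `X`, with composition as multiplication:
`(f * g) x = f (g x)`, identity `Homeomorph.refl` and inverse `Homeomorph.symm`. -/
instance homeoGroup (X : Type*) [TopologicalSpace X] : Group (X ≃ₜ X) where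
  mul f g := g.trans f
  one := Homeomorph.refl X
  inv := Homeomorph.symm
  mul_assoc f g h := rfl
  one_mul f := rfl
  mul_one f := rfl
  inv_mul_cancel f := by ext x; exact f.symm_apply_apply x

/-- The compact-open topology on the homeomorphism group `H(X)`, induced from the
compact-open topology on `C(X, X)`. -/
def coTop (X : Type*) [TopologicalSpace X] : TopologicalSpace (X ≃ₜ X) :=
  TopologicalSpace.induced (fun f : X ≃ₜ X => (f : C(X, X))) ContinuousMap.compactOpen

/-- The unique uniformity compatible with the topology of a compact Hausdorff space. -/
def cptUnif (X : Type*) [TopologicalSpace X] [CompactSpace X] [T2Space X] :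
    Filter (X × X) :=
  @uniformity X uniformSpaceOfCompactR1

/-- An action `act` of a group `G` equipped with a topology `σ` on a set `X` equipped with a
uniformity (filter) `𝔅` is *π-uniform* if for every `g₀ ∈ G` and every entourage `ε ∈ 𝔅`
there exist an entourage `δ ∈ 𝔅` and a neighborhood `U` of `g₀` such that
`(g • x, g • y) ∈ ε` whenever `(x, y) ∈ δ` and `g ∈ U`. -/
def IsPiUniform {G X : Type*} (σ : TopologicalSpace G) (𝔅 : Filter (X × X))
    (act : G → X → X) : Prop :=
  ∀ g₀ : G, ∀ ε ∈ 𝔅, ∃ δ ∈ 𝔅, ∃ U ∈ @nhds G σ g₀,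
    ∀ g ∈ U, ∀ x y : X, (x, y) ∈ δ → (act g x, act g y) ∈ ε

/-- The group `Aut(G)` of all topological group automorphisms of a topological group `G`
(group automorphisms that are homeomorphisms), as a subgroup of the homeomorphism
group of `G`. -/
def topAut (G : Type*) [Group G] [TopologicalSpace G] : Subgroup (G ≃ₜ G) where
  carrier := {f : G ≃ₜ G | ∀ a b : G, f (a * b) = f a * f b}
  one_mem' := fun _ _ => rfl
  mul_mem' := by
    intro f g hf hg a b
    show f (g (a * b)) = f (g a) * f (g b)
    rw [hg, hf]
  inv_mem' := by
    intro f hf a b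
    show f.symm (a * b) = f.symm a * f.symm b
    apply f.injective
    rw [hf]
    simp

/-- The compact-open topology on `Aut(G)`. -/
def autTop (G : Type*) [Group G] [TopologicalSpace G] : TopologicalSpace ↥(topAut G) :=
  TopologicalSpace.induced (Subtype.val : ↥(topAut G) → G ≃ₜ G) (coTop G)

section AuxLemmas

open Filter Set

variable {K : Type*} [Group K] [TopologicalSpace K] [IsTopologicalGroup K]
  [CompactSpace K] [T2Space K]

/-- Entourages from neighborhoods of `1`. -/
lemma memCptUnif_of_nhds_one {W : Set K} (hW : W ∈ 𝓝 (1 : K)) :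
    {p : K × K | p.1⁻¹ * p.2 ∈ W} ∈ cptUnif K := by
  show _ ∈ 𝓝ˢ (Set.diagonal K)
  rw [mem_nhdsSet_iff_exists]
  refine ⟨(fun p : K × K => p.1⁻¹ * p.2) ⁻¹' interior W,
    isOpen_interior.preimage (continuous_fst.inv.mul continuous_snd), ?_, ?_⟩
  · rintro ⟨x, y⟩ (rfl : x = y)
    simp only [Set.mem_preimage, inv_mul_cancel]
    exact mem_interior_iff_mem_nhds.2 hW
  · exact fun p hp => show p.1⁻¹ * p.2 ∈ W from interior_subset hp

/-- Every entourage contains a "left-uniform" entourage coming from a neighborhood of `1`. -/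
lemma exists_nhds_one_subset_cptUnif {ε : Set (K × K)} (hε : ε ∈ cptUnif K) :
    ∃ W ∈ 𝓝 (1 : K), ∀ a b : K, a⁻¹ * b ∈ W → (a, b) ∈ ε := by
  have hε' : ε ∈ 𝓝ˢ (Set.diagonal K) := hε
  rw [mem_nhdsSet_iff_exists] at hε'
  obtain ⟨O, hO, hdiag, hOε⟩ := hε'
  set μ : K × K → K := fun p => p.1⁻¹ * p.2 with hμ
  have hμc : Continuous μ := continuous_fst.inv.mul continuous_snd
  have hcpt : IsCompact (μ '' Oᶜ) := (hO.isClosed_compl.isCompact).image hμc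
  have hclosed : IsClosed (μ '' Oᶜ) := hcpt.isClosed
  have h1 : (1 : K) ∉ μ '' Oᶜ := by
    rintro ⟨⟨a, b⟩, hab, h1⟩
    have hab' : a = b := by
      have : a⁻¹ * b = 1 := h1
      rw [inv_mul_eq_one] at this
      exact this
    exact hab (hdiag (show (a, b) ∈ Set.diagonal K from hab'))
  refine ⟨(μ '' Oᶜ)ᶜ, hclosed.isOpen_compl.mem_nhds h1, fun a b hab => ?_⟩
  by_contra h
  have habO : (a, b) ∈ Oᶜ := fun hmem => h (hOε hmem)
  exact hab ⟨(a, b), habO, rfl⟩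

/-- Compact groups have conjugation-invariant small neighborhoods of `1` (SIN). -/
lemma exists_conj_invariant_nhds {W : Set K} (hW : W ∈ 𝓝 (1 : K)) :
    ∃ V ∈ 𝓝 (1 : K), ∀ c v : K, v ∈ V → c⁻¹ * v * c ∈ W := by
  set φ : K × K → K := fun p => p.1⁻¹ * p.2 * p.1 with hφdef
  have hφ : Continuous φ := (continuous_fst.inv.mul continuous_snd).mul continuous_fst
  have hsub : (Set.univ : Set K) ×ˢ ({1} : Set K) ⊆ φ ⁻¹' interior W := by
    rintro ⟨c, v⟩ ⟨-, (rfl : v = 1)⟩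
    have : φ (c, 1) = 1 := by simp [hφdef]
    simp only [Set.mem_preimage, this]
    exact mem_interior_iff_mem_nhds.2 hW
  obtain ⟨u, v, hu, hv, hsu, hsv, huv⟩ :=
    generalized_tube_lemma isCompact_univ isCompact_singleton
      (isOpen_interior.preimage hφ) hsub
  refine ⟨v, hv.mem_nhds (hsv rfl), fun c x hx => ?_⟩
  have hm : (c, x) ∈ u ×ˢ v := ⟨hsu (Set.mem_univ c), hx⟩
  exact interior_subset (huv hm)

/-- A compact group is covered by finitely many right translates of any neighborhood of `1`. -/
lemma exists_finite_cover_nhds_one {V : Set K} (hV : V ∈ 𝓝 (1 : K)) :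
    ∃ C : Finset K, ∀ x : K, ∃ c ∈ C, x * c⁻¹ ∈ V := by
  obtain ⟨C, hC⟩ := CompactSpace.elim_nhds_subcover (fun c => (fun x => x * c⁻¹) ⁻¹' V)
    (fun c => ((continuous_id.mul continuous_const).continuousAt).preimage_mem_nhds
      (by simpa using hV))
  refine ⟨C, fun x => ?_⟩
  have hx : x ∈ ⋃ c ∈ C, (fun x => x * c⁻¹) ⁻¹' V := by rw [hC]; trivial
  simpa using hx

/-- A symmetric neighborhood whose square is contained in a given neighborhood. -/
lemma exists_symm_nhds_mul_subset {W : Set K} (hW : W ∈ 𝓝 (1 : K)) :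
    ∃ S ∈ 𝓝 (1 : K), (∀ s ∈ S, s⁻¹ ∈ S) ∧ ∀ a ∈ S, ∀ b ∈ S, a * b ∈ W := by
  obtain ⟨V, hV, hVmul⟩ := exists_nhds_one_split hW
  refine ⟨V ∩ V⁻¹, Filter.inter_mem hV (inv_mem_nhds_one (G := K) hV), ?_, ?_⟩
  · rintro s ⟨hs1, hs2⟩
    exact ⟨hs2, by simpa using hs1⟩
  · rintro a ⟨ha, -⟩ b ⟨hb, -⟩
    exact hVmul a ha b hb

/-- An ultrafilter limit of an "equicontinuous at 1" family of abstract endomorphisms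
of a compact group is a continuous homomorphism. -/
lemma aux_hom_limit {ι : Type*} (𝔘 : Ultrafilter ι)
    (a : ι → K → K) (hhom : ∀ i, ∀ x y : K, a i (x * y) = a i x * a i y)
    (f : K → K) (hf : ∀ x, Filter.Tendsto (fun i => a i x) 𝔘 (𝓝 (f x)))
    (hEV : ∀ W ∈ 𝓝 (1 : K), ∃ V ∈ 𝓝 (1 : K), ∀ᶠ i in (𝔘 : Filter ι), ∀ v ∈ V, a i v ∈ W) :
    (∀ x y : K, f (x * y) = f x * f y) ∧ Continuous f := by
  have hfm : ∀ x y : K, f (x * y) = f x * f y := by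
    intro x y
    have h1 : Filter.Tendsto (fun i => a i (x * y)) 𝔘 (𝓝 (f x * f y)) := by
      have := (hf x).mul (hf y)
      exact this.congr fun i => (hhom i x y).symm
    exact tendsto_nhds_unique (hf (x * y)) h1
  have hf1 : f 1 = 1 := by
    have h := hfm 1 1
    rw [one_mul] at h
    exact (left_eq_mul.mp h)
  have hc1 : Filter.Tendsto f (𝓝 (1 : K)) (𝓝 (1 : K)) := by
    rw [Filter.tendsto_def]
    intro s hs
    obtain ⟨Wc, hWc, hWcC, hWcs⟩ := exists_mem_nhds_isClosed_subset hs
    obtain ⟨V, hV, hVev⟩ := hEV Wc hWc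
    refine Filter.mem_of_superset hV fun v hv => ?_
    exact hWcs (hWcC.mem_of_tendsto (hf v) (hVev.mono fun i hi => hi v hv))
  refine ⟨hfm, ?_⟩
  rw [continuous_iff_continuousAt]
  intro x
  have key : ∀ y : K, f x * f (x⁻¹ * y) = f y := fun y => by
    rw [← hfm, mul_inv_cancel_left]
  have t1 : Filter.Tendsto (fun y : K => x⁻¹ * y) (𝓝 x) (𝓝 (1 : K)) := by
    have := (continuous_mul_left x⁻¹).tendsto x
    simpa using this
  have h2 : Filter.Tendsto (fun y : K => f x * f (x⁻¹ * y)) (𝓝 x) (𝓝 (f x)) := by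
    have := Filter.Tendsto.mul (tendsto_const_nhds (x := f x)) (hc1.comp t1)
    simpa using this
  exact h2.congr key

end AuxLemmas

/-- Let `K` be a compact Hausdorff topological group and let `P` be a closed
subgroup of `Aut(K)` (the group of topological group automorphisms of `K` with the
compact-open topology).  Then the compact-open topology on `P` is minimal within the class
of π-uniform topologies on `P`. -/
theorem compactOpen_minimal_piUniform_topAut {K : Type*}
    [Group K] [TopologicalSpace K] [IsTopologicalGroup K] [CompactSpace K] [T2Space K]
    (P : Subgroup ↥(topAut K))
    (hPclosed : IsClosed[autTop K] (P : Set ↥(topAut K)))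
    (σ : TopologicalSpace ↥P)
    (hσgrp : @IsTopologicalGroup ↥P σ _) (hσT2 : @T2Space ↥P σ)
    (hcoarse : TopologicalSpace.induced (Subtype.val : ↥P → ↥(topAut K)) (autTop K) ≤ σ)
    (hπ : IsPiUniform σ (cptUnif K) (fun (p : ↥P) (x : K) => p.1.1 x)) :
    σ = TopologicalSpace.induced (Subtype.val : ↥P → ↥(topAut K)) (autTop K) := by
  classical
  letI : TopologicalSpace ↥P := σ
  haveI : @IsTopologicalGroup ↥P σ _ := hσgrp
  haveI : @T2Space ↥P σ := hσT2
  -- the evaluation into `C(K, K)`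
  set ev : ↥P → C(K, K) := fun p => (p.1.1 : C(K, K)) with hevdef
  have hτev : TopologicalSpace.induced (Subtype.val : ↥P → ↥(topAut K)) (autTop K)
      = TopologicalSpace.induced ev ContinuousMap.compactOpen := by
    rw [autTop, coTop, induced_compose, induced_compose]
    rfl
  have hnτ : ∀ p : ↥P, @nhds _ (TopologicalSpace.induced (Subtype.val : ↥P → ↥(topAut K)) (autTop K)) p = Filter.comap ev (𝓝 (ev p)) := by
    intro p
    rw [hτev]
    exact @nhds_induced _ _ _ ev p
  -- the action
  set act : ↥P → K → K := fun p x => p.1.1 x with hactdef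
  have hhomg : ∀ g : ↥P, ∀ x y : K, act g (x * y) = act g x * act g y := fun g => g.1.2
  have hact1 : ∀ g : ↥P, act g 1 = 1 := by
    intro g
    have h := hhomg g 1 1
    rw [one_mul] at h
    exact left_eq_mul.mp h
  have hinv1 : ∀ (g : ↥P) (x : K), act g⁻¹ (act g x) = x := fun g x =>
    g.1.1.symm_apply_apply x
  have hinv2 : ∀ (g : ↥P) (x : K), act g (act g⁻¹ x) = x := fun g x =>
    g.1.1.apply_symm_apply x
  -- equicontinuity at 1 from π-uniformity
  have hEC : ∀ W ∈ 𝓝 (1 : K), ∃ V ∈ 𝓝 (1 : K), ∃ U ∈ 𝓝 (1 : ↥P),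
      ∀ g ∈ U, ∀ v ∈ V, act g v ∈ W := by
    intro W hW
    obtain ⟨δ, hδ, U, hU, hgd⟩ := hπ 1 _ (memCptUnif_of_nhds_one hW)
    obtain ⟨V, hV, hVδ⟩ := exists_nhds_one_subset_cptUnif hδ
    refine ⟨V, hV, U, hU, fun g hg v hv => ?_⟩
    have h1 : ((1 : K), v) ∈ δ := hVδ 1 v (by simpa using hv)
    have h2 := hgd g hg 1 v h1
    have h3 : (act g 1)⁻¹ * act g v ∈ W := h2
    rw [hact1 g] at h3
    simpa using h3
  have hECinv : ∀ W ∈ 𝓝 (1 : K), ∃ V ∈ 𝓝 (1 : K), ∃ U ∈ 𝓝 (1 : ↥P),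
      ∀ g ∈ U, ∀ v ∈ V, act g⁻¹ v ∈ W := by
    intro W hW
    obtain ⟨V, hV, U, hU, h⟩ := hEC W hW
    refine ⟨V, hV, (fun g : ↥P => g⁻¹) ⁻¹' U,
      (continuous_inv.continuousAt).preimage_mem_nhds (by rw [inv_one]; exact hU),
      fun g hg v hv => h g⁻¹ hg v hv⟩
  -- the key step: every τ-neighborhood of 1 is a σ-neighborhood of 1
  have key : ∀ N : Set ↥P, N ∈ @nhds _ (TopologicalSpace.induced (Subtype.val : ↥P → ↥(topAut K)) (autTop K)) (1 : ↥P) → N ∈ 𝓝 (1 : ↥P) := by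
    intro N hN
    by_contra hNot
    have hne : Filter.NeBot (𝓝 (1 : ↥P) ⊓ Filter.principal Nᶜ) := by
      rw [Filter.inf_principal_neBot_iff]
      intro U hU
      rcases Set.not_subset.mp (fun hsub => hNot (Filter.mem_of_superset hU hsub)) with
        ⟨x, hxU, hxN⟩
      exact ⟨x, hxU, hxN⟩
    set 𝔘 : Ultrafilter ↥P := @Ultrafilter.of _ (𝓝 (1 : ↥P) ⊓ Filter.principal Nᶜ) hne
      with h𝔘def
    have h𝔘le : (𝔘 : Filter ↥P) ≤ 𝓝 (1 : ↥P) :=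
      le_trans (Ultrafilter.of_le _) inf_le_left
    have h𝔘N : Nᶜ ∈ 𝔘 :=
      Filter.le_def.mp (Ultrafilter.of_le _) _
        (Filter.mem_inf_of_right (Filter.mem_principal_self _))
    -- pointwise ultrafilter limits
    have hKne : Nonempty K := ⟨1⟩
    set f : K → K := fun x => (𝔘.map (fun g => act g x)).lim with hfdef
    set h : K → K := fun x => (𝔘.map (fun g => act g⁻¹ x)).lim with hhdef
    have hf : ∀ x : K, Filter.Tendsto (fun g => act g x) (𝔘 : Filter ↥P) (𝓝 (f x)) :=
      fun x => Ultrafilter.le_nhds_lim _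
    have hh : ∀ x : K, Filter.Tendsto (fun g => act g⁻¹ x) (𝔘 : Filter ↥P) (𝓝 (h x)) :=
      fun x => Ultrafilter.le_nhds_lim _
    -- eventual equicontinuity along 𝔘
    have hEV : ∀ W ∈ 𝓝 (1 : K), ∃ V ∈ 𝓝 (1 : K),
        ∀ᶠ g in (𝔘 : Filter ↥P), ∀ v ∈ V, act g v ∈ W := by
      intro W hW
      obtain ⟨V, hV, U, hU, hgv⟩ := hEC W hW
      exact ⟨V, hV, Filter.mem_of_superset (Filter.le_def.mp h𝔘le U hU) hgv⟩
    have hEVinv : ∀ W ∈ 𝓝 (1 : K), ∃ V ∈ 𝓝 (1 : K),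
        ∀ᶠ g in (𝔘 : Filter ↥P), ∀ v ∈ V, act g⁻¹ v ∈ W := by
      intro W hW
      obtain ⟨V, hV, U, hU, hgv⟩ := hECinv W hW
      exact ⟨V, hV, Filter.mem_of_superset (Filter.le_def.mp h𝔘le U hU) hgv⟩
    obtain ⟨hfm, hfc⟩ := aux_hom_limit 𝔘 act hhomg f hf hEV
    obtain ⟨hhm, hhc⟩ := aux_hom_limit 𝔘 (fun g => act g⁻¹) (fun g => hhomg g⁻¹) h hh hEVinv
    have hf1 : f 1 = 1 := by
      have h0 := hfm 1 1
      rw [one_mul] at h0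
      exact left_eq_mul.mp h0
    have hh1 : h 1 = 1 := by
      have h0 := hhm 1 1
      rw [one_mul] at h0
      exact left_eq_mul.mp h0
    have hfinv : ∀ x : K, f x⁻¹ = (f x)⁻¹ := by
      intro x
      have h0 : f x * f x⁻¹ = 1 := by rw [← hfm, mul_inv_cancel, hf1]
      exact eq_inv_of_mul_eq_one_right h0
    -- h ∘ f = id
    have hhf : ∀ x : K, h (f x) = x := by
      intro x
      have hw : Filter.Tendsto (fun g : ↥P => (f x)⁻¹ * act g x) (𝔘 : Filter ↥P)
          (𝓝 (1 : K)) := by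
        have := Filter.Tendsto.mul (tendsto_const_nhds (x := (f x)⁻¹)) (hf x)
        simpa using this
      have t2 : Filter.Tendsto (fun g : ↥P => act g⁻¹ ((f x)⁻¹ * act g x))
          (𝔘 : Filter ↥P) (𝓝 (1 : K)) := by
        rw [Filter.tendsto_def]
        intro s hs
        obtain ⟨V, hV, hev⟩ := hEVinv s hs
        have hwv : ∀ᶠ g in (𝔘 : Filter ↥P), (f x)⁻¹ * act g x ∈ V := hw.eventually_mem hV
        exact (hev.and hwv).mono fun g ⟨h1, h2⟩ => h1 _ h2
      have t3 : Filter.Tendsto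
          (fun g : ↥P => act g⁻¹ (f x) * act g⁻¹ ((f x)⁻¹ * act g x))
          (𝔘 : Filter ↥P) (𝓝 (h (f x) * 1)) := (hh (f x)).mul t2
      have t4 : ∀ g : ↥P, act g⁻¹ (f x) * act g⁻¹ ((f x)⁻¹ * act g x) = x := by
        intro g
        rw [← hhomg g⁻¹, mul_inv_cancel_left, hinv1]
      have t5 := tendsto_nhds_unique (t3.congr t4) tendsto_const_nhds
      simpa using t5
    -- f ∘ h = id
    have hfh : ∀ x : K, f (h x) = x := by
      intro x
      have hw : Filter.Tendsto (fun g : ↥P => (h x)⁻¹ * act g⁻¹ x) (𝔘 : Filter ↥P)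
          (𝓝 (1 : K)) := by
        have := Filter.Tendsto.mul (tendsto_const_nhds (x := (h x)⁻¹)) (hh x)
        simpa using this
      have t2 : Filter.Tendsto (fun g : ↥P => act g ((h x)⁻¹ * act g⁻¹ x))
          (𝔘 : Filter ↥P) (𝓝 (1 : K)) := by
        rw [Filter.tendsto_def]
        intro s hs
        obtain ⟨V, hV, hev⟩ := hEV s hs
        have hwv : ∀ᶠ g in (𝔘 : Filter ↥P), (h x)⁻¹ * act g⁻¹ x ∈ V := hw.eventually_mem hV
        exact (hev.and hwv).mono fun g ⟨h1, h2⟩ => h1 _ h2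
      have t3 : Filter.Tendsto
          (fun g : ↥P => act g (h x) * act g ((h x)⁻¹ * act g⁻¹ x))
          (𝔘 : Filter ↥P) (𝓝 (f (h x) * 1)) := (hf (h x)).mul t2
      have t4 : ∀ g : ↥P, act g (h x) * act g ((h x)⁻¹ * act g⁻¹ x) = x := by
        intro g
        rw [← hhomg g, mul_inv_cancel_left, hinv2]
      have t5 := tendsto_nhds_unique (t3.congr t4) tendsto_const_nhds
      simpa using t5
    -- the left-uniform convergence of h ∘ act g to the identity
    have hkey1 : ∀ W ∈ 𝓝 (1 : K),
        ∀ᶠ g in (𝔘 : Filter ↥P), ∀ x : K, x⁻¹ * h (act g x) ∈ W := by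
      intro W hW
      obtain ⟨W₁, hW₁, hW₁mul⟩ := exists_nhds_one_split hW
      obtain ⟨V₁, hV₁, hconj⟩ := exists_conj_invariant_nhds hW₁
      obtain ⟨S, hS, hSsymm, hSmul⟩ := exists_symm_nhds_mul_subset hV₁
      have hW₂ : h ⁻¹' interior S ∈ 𝓝 (1 : K) := by
        refine hhc.continuousAt.preimage_mem_nhds ?_
        rw [hh1]
        exact interior_mem_nhds.mpr hS
      obtain ⟨V₃, hV₃, hev₃⟩ := hEV _ hW₂
      obtain ⟨C, hC⟩ := exists_finite_cover_nhds_one (Filter.inter_mem hS hV₃)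
      have hptC : ∀ᶠ g in (𝔘 : Filter ↥P), ∀ c ∈ C, c⁻¹ * h (act g c) ∈ W₁ := by
        rw [Filter.eventually_all_finset]
        intro c hc
        have t1 : Filter.Tendsto (fun g : ↥P => c⁻¹ * h (act g c)) (𝔘 : Filter ↥P)
            (𝓝 (c⁻¹ * h (f c))) :=
          Filter.Tendsto.mul tendsto_const_nhds ((hhc.tendsto _).comp (hf c))
        have t2 : Filter.Tendsto (fun g : ↥P => c⁻¹ * h (act g c)) (𝔘 : Filter ↥P)
            (𝓝 (1 : K)) := by
          rw [hhf c] at t1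
          simpa using t1
        exact t2.eventually_mem hW₁
      filter_upwards [hptC, hev₃] with g hgC hgV₃
      intro x
      obtain ⟨c, hcC, hvc⟩ := hC x
      have hvS : x * c⁻¹ ∈ S := hvc.1
      have hvV₃ : x * c⁻¹ ∈ V₃ := hvc.2
      set v : K := x * c⁻¹ with hvdef
      have hx : x = v * c := by rw [hvdef, inv_mul_cancel_right]
      have hkv : h (act g v) ∈ S := interior_subset (hgV₃ v hvV₃)
      have hfac : x⁻¹ * h (act g x) =
          (c⁻¹ * (v⁻¹ * h (act g v)) * c) * (c⁻¹ * h (act g c)) := by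
        rw [hx, hhomg g v c, hhm]
        group
      rw [hfac]
      exact hW₁mul _ (hconj c _ (hSmul _ (hSsymm v hvS) _ hkv)) _ (hgC c hcC)
    -- assemble the limit automorphism
    set F : K ≃ₜ K := ⟨⟨f, h, hhf, hfh⟩, hfc, hhc⟩ with hFdef
    have hFA : F ∈ topAut K := hfm
    set FA : ↥(topAut K) := ⟨F, hFA⟩ with hFAdef
    -- uniform convergence, hence compact-open convergence, of ev along 𝔘
    have htendU : Filter.Tendsto ev (𝔘 : Filter ↥P) (𝓝 (F : C(K, K))) := by
      letI : UniformSpace K := uniformSpaceOfCompactR1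
      rw [ContinuousMap.tendsto_iff_tendstoUniformly]
      intro ε hε
      obtain ⟨W', hW', hW'ε⟩ := exists_nhds_one_subset_cptUnif (ε := ε) hε
      have hWf : f ⁻¹' interior W' ∈ 𝓝 (1 : K) := by
        refine hfc.continuousAt.preimage_mem_nhds ?_
        rw [hf1]
        exact interior_mem_nhds.mpr hW'
      filter_upwards [hkey1 _ hWf] with g hg x
      have h2 : f (x⁻¹ * h (act g x)) ∈ W' := interior_subset (hg x)
      have h3 : (f x)⁻¹ * act g x ∈ W' := by
        rw [hfm, hfinv, hfh] at h2
        exact h2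
      exact hW'ε _ _ h3
    -- convergence in `autTop`
    have htendA : Filter.Tendsto (fun g : ↥P => (g : ↥(topAut K))) (𝔘 : Filter ↥P)
        (@nhds _ (autTop K) FA) := by
      rw [autTop, @nhds_induced _ _ (coTop K) _ FA, Filter.tendsto_comap_iff,
        coTop, @nhds_induced _ _ ContinuousMap.compactOpen _ FA.1, Filter.tendsto_comap_iff]
      exact htendU
    -- the limit lies in P since P is closed
    have hFAP : FA ∈ (P : Set ↥(topAut K)) := by
      by_contra hFP
      have hop : (↑P : Set ↥(topAut K))ᶜ ∈ @nhds _ (autTop K) FA :=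
        by letI : TopologicalSpace ↥(topAut K) := autTop K
           exact hPclosed.isOpen_compl.mem_nhds hFP
      have hev := Filter.le_def.mp htendA _ hop
      rw [Filter.mem_map] at hev
      obtain ⟨g, hg⟩ := Filter.nonempty_of_mem hev
      exact hg g.2
    -- convergence in τ and in σ, and the contradiction
    have htendτ : Filter.Tendsto (fun g : ↥P => g) (𝔘 : Filter ↥P)
        (@nhds _ (TopologicalSpace.induced (Subtype.val : ↥P → ↥(topAut K)) (autTop K)) (⟨FA, hFAP⟩ : ↥P)) := by
      rw [@nhds_induced _ _ (autTop K) _ (⟨FA, hFAP⟩ : ↥P), Filter.tendsto_comap_iff]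
      exact htendA
    have h𝔘τ : (𝔘 : Filter ↥P) ≤ @nhds _ (TopologicalSpace.induced (Subtype.val : ↥P → ↥(topAut K)) (autTop K)) (⟨FA, hFAP⟩ : ↥P) := by
      have := htendτ
      rwa [show (fun g : ↥P => g) = id from rfl, Filter.tendsto_id'] at this
    have h𝔘σ : (𝔘 : Filter ↥P) ≤ 𝓝 (⟨FA, hFAP⟩ : ↥P) :=
      le_trans h𝔘τ (nhds_mono hcoarse)
    have hpeq : (⟨FA, hFAP⟩ : ↥P) = 1 := by
      have A : Filter.Tendsto (id : ↥P → ↥P) (𝔘 : Filter ↥P) (𝓝 (⟨FA, hFAP⟩ : ↥P)) := by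
        rwa [Filter.tendsto_id']
      have B : Filter.Tendsto (id : ↥P → ↥P) (𝔘 : Filter ↥P) (𝓝 (1 : ↥P)) := by
        rwa [Filter.tendsto_id']
      exact tendsto_nhds_unique A B
    have hNmem : N ∈ (𝔘 : Filter ↥P) := by
      apply Filter.le_def.mp h𝔘τ
      rw [hpeq]
      exact hN
    obtain ⟨x, hx1, hx2⟩ := Filter.nonempty_of_mem (Filter.inter_mem hNmem h𝔘N)
    exact hx2 hx1
  -- conclude: σ ≤ τ by translating to 1, then antisymmetry
  refine le_antisymm ?_ hcoarse
  rw [le_iff_nhds]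
  intro p
  refine Filter.le_def.mpr fun N hN => ?_
  -- left translation by p is τ-continuous
  have hLτ : Filter.Tendsto (fun q : ↥P => p * q) (@nhds _ (TopologicalSpace.induced (Subtype.val : ↥P → ↥(topAut K)) (autTop K)) (1 : ↥P)) (@nhds _ (TopologicalSpace.induced (Subtype.val : ↥P → ↥(topAut K)) (autTop K)) p) := by
    rw [hnτ, hnτ, Filter.tendsto_comap_iff]
    have hcomp : (ev ∘ fun q : ↥P => p * q) = (fun q : C(K, K) => (ev p).comp q) ∘ ev :=
      funext fun q => ContinuousMap.ext fun x => rfl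
    rw [hcomp]
    have h1 : Filter.Tendsto ev (Filter.comap ev (𝓝 (ev 1))) (𝓝 (ev 1)) :=
      Filter.tendsto_comap
    have h2 := ((ContinuousMap.continuous_postcomp (ev p)).tendsto (ev 1)).comp h1
    have h3 : (ev p).comp (ev 1) = ev p := ContinuousMap.ext fun _ => rfl
    rwa [h3] at h2
  have hM : (fun q : ↥P => p * q) ⁻¹' N ∈ @nhds _ (TopologicalSpace.induced (Subtype.val : ↥P → ↥(topAut K)) (autTop K)) (1 : ↥P) := by
    have := Filter.le_def.mp hLτ N hN
    rwa [Filter.mem_map] at this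
  have hM1 : (fun q : ↥P => p * q) ⁻¹' N ∈ 𝓝 (1 : ↥P) := key _ hM
  have hLσ : Filter.Tendsto (fun q : ↥P => p⁻¹ * q) (𝓝 p) (𝓝 (1 : ↥P)) := by
    have h0 := (continuous_mul_left p⁻¹).tendsto p
    rwa [inv_mul_cancel] at h0
  have h3 := Filter.le_def.mp hLσ _ hM1
  rw [Filter.mem_map] at h3
  refine Filter.mem_of_superset h3 fun q hq => ?_
  have : p * (p⁻¹ * q) ∈ N := hq
  simpa using this
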